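/- Let (e,f) be a local BMW pair in A. Then κ_e·f·κ_e = ν⁻¹·κ_e and κ_e·f⁻¹·κ_e = ν·κ_e. -/
import Mathlib


namespace BMWPaper

noncomputable section

/-- `κ_u := λ⁻¹ ν⁻¹ (q - u)(q⁻¹ + u)` for an invertible element `u` of a ℂ-algebra,
where `λ := q - q⁻¹`. -/
def kap (q ν : ℂ) {A : Type*} [Ring A] [Algebra ℂ A] (u : Aˣ) : A :=
  ((q - q⁻¹)⁻¹ * ν⁻¹) • ((q • (1 : A) - (u : A)) * (q⁻¹ • (1 : A) + (u : A)))

/-- `μ := λ⁻¹ ν⁻¹ (q - ν)(q⁻¹ + ν)`. -/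
def muBMW (q ν : ℂ) : ℂ := ((q - q⁻¹)⁻¹ * ν⁻¹) * ((q - ν) * (q⁻¹ + ν))

/-- A local BMW pair `(e, f)` of invertible elements of a ℂ-algebra `A`:
`efe = fef`, `e κ_e = κ_e e = ν κ_e`, `f κ_f = κ_f f = ν κ_f`,
`κ_f e κ_f = ν⁻¹ κ_f` and `κ_f e⁻¹ κ_f = ν κ_f`. -/
def LocalBMWPair (q ν : ℂ) {A : Type*} [Ring A] [Algebra ℂ A] (e f : Aˣ) : Prop :=
  (e : A) * f * e = (f : A) * e * f ∧
  (e : A) * kap q ν e = ν • kap q ν e ∧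
  kap q ν e * e = ν • kap q ν e ∧
  (f : A) * kap q ν f = ν • kap q ν f ∧
  kap q ν f * f = ν • kap q ν f ∧
  kap q ν f * e * kap q ν f = ν⁻¹ • kap q ν f ∧
  kap q ν f * (↑e⁻¹ : A) * kap q ν f = ν • kap q ν f

/-- Conjugation by a unit, as a `ℂ`-algebra homomorphism. -/
def conjA {A : Type*} [Ring A] [Algebra ℂ A] (u : Aˣ) : A →ₐ[ℂ] A where
  toFun x := ↑u * x * ↑u⁻¹
  map_one' := by simp
  map_mul' x y := by simp only [mul_assoc, Units.inv_mul_cancel_left]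
  map_zero' := by simp
  map_add' x y := by noncomm_ring
  commutes' r := by
    simp only [← Algebra.commutes r (↑u : A), mul_assoc, Units.mul_inv, mul_one]

lemma conjA_apply {A : Type*} [Ring A] [Algebra ℂ A] (u : Aˣ) (x : A) :
    conjA u x = ↑u * x * ↑u⁻¹ := rfl

lemma map_kap {A : Type*} [Ring A] [Algebra ℂ A] (q ν : ℂ) (φ : A →ₐ[ℂ] A) (u : Aˣ) :
    φ (kap q ν u) =
      ((q - q⁻¹)⁻¹ * ν⁻¹) • ((q • (1 : A) - φ u) * (q⁻¹ • (1 : A) + φ u)) := by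
  simp [kap]

/-- for a local BMW pair `(e,f)`:
`κ_e f κ_e = ν⁻¹ κ_e` and `κ_e f⁻¹ κ_e = ν κ_e`. -/
theorem stmt4 (q ν : ℂ) (hq0 : q ≠ 0) (hq1 : q ≠ 1) (hqm1 : q ≠ -1)
    (hν0 : ν ≠ 0) (hνq : ν ≠ q) (hνq' : ν ≠ -q⁻¹)
    (A : Type*) [Ring A] [Algebra ℂ A]
    (e f : Aˣ) (h : LocalBMWPair q ν e f) :
    kap q ν e * f * kap q ν e = ν⁻¹ • kap q ν e ∧
    kap q ν e * (↑f⁻¹ : A) * kap q ν e = ν • kap q ν e := by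
  obtain ⟨hbr, he1, he2, hf1, hf2, hk1, hk2⟩ := h
  -- Braid relation at the level of units
  have hbrU : e * f * e = f * e * f := Units.ext (by simpa using hbr)
  -- κ_f · f⁻¹ absorbed from the left:  f⁻¹ κ_f = ν⁻¹ κ_f
  have hfinv : (↑f⁻¹ : A) * kap q ν f = ν⁻¹ • kap q ν f := by
    have h0 : kap q ν f = ν • ((↑f⁻¹ : A) * kap q ν f) := by
      calc kap q ν f = (↑f⁻¹ : A) * ((↑f : A) * kap q ν f) := by
            rw [Units.inv_mul_cancel_left]
        _ = ν • ((↑f⁻¹ : A) * kap q ν f) := by rw [hf1, mul_smul_comm]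
    calc (↑f⁻¹ : A) * kap q ν f
        = ν⁻¹ • (ν • ((↑f⁻¹ : A) * kap q ν f)) := by
          rw [smul_smul, inv_mul_cancel₀ hν0, one_smul]
      _ = ν⁻¹ • kap q ν f := by rw [← h0]
  -- braid consequences at unit level
  have hbraid1U : f * e * f⁻¹ = e⁻¹ * f * e := by
    have h1 : e * (e⁻¹ * f * e) = e * (f * e * f⁻¹) := by
      calc e * (e⁻¹ * f * e) = f * e := by group
        _ = (f * e * f) * f⁻¹ := by group
        _ = (e * f * e) * f⁻¹ := by rw [hbrU]
        _ = e * (f * e * f⁻¹) := by group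
    exact (mul_left_cancel h1).symm
  have hbraid2U : f * e⁻¹ * f⁻¹ = e⁻¹ * f⁻¹ * e := by
    have := congrArg (·⁻¹) hbraid1U
    simpa [mul_inv_rev, mul_assoc] using this
  -- conjugation by f*e sends f to e, hence κ_f to κ_e
  have hconj_e : conjA (f * e) (↑f : A) = ↑e := by
    rw [conjA_apply, ← Units.val_mul, ← Units.val_mul]
    congr 1
    calc (f * e) * f * (f * e)⁻¹ = (f * e * f) * (e⁻¹ * f⁻¹) := by group
      _ = (e * f * e) * (e⁻¹ * f⁻¹) := by rw [hbrU]
      _ = e := by group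
  have hkap_conj : conjA (f * e) (kap q ν f) = kap q ν e := by
    rw [map_kap, hconj_e]; rfl
  -- conjugation by f*e sends f*e*f⁻¹ to f, and f*e⁻¹*f⁻¹ to f⁻¹
  have hmid1 : conjA (f * e) ((↑f : A) * ↑e * ↑f⁻¹) = ↑f := by
    rw [show ((↑f : A) * ↑e * ↑f⁻¹) = ↑(f * e * f⁻¹) by
      rw [Units.val_mul, Units.val_mul]]
    rw [conjA_apply, ← Units.val_mul, ← Units.val_mul]
    congr 1
    rw [hbraid1U]
    group
  have hmid2 : conjA (f * e) ((↑f : A) * ↑e⁻¹ * ↑f⁻¹) = ↑f⁻¹ := by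
    rw [show ((↑f : A) * ↑e⁻¹ * ↑f⁻¹) = ↑(f * e⁻¹ * f⁻¹) by
      rw [Units.val_mul, Units.val_mul]]
    rw [conjA_apply, ← Units.val_mul, ← Units.val_mul]
    congr 1
    rw [hbraid2U]
    group
  -- the two inner computations
  have inner1 : kap q ν f * ((↑f : A) * ↑e * ↑f⁻¹) * kap q ν f = ν⁻¹ • kap q ν f := by
    calc kap q ν f * ((↑f : A) * ↑e * ↑f⁻¹) * kap q ν f
        = (kap q ν f * ↑f) * ↑e * ((↑f⁻¹ : A) * kap q ν f) := by
          simp only [mul_assoc]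
      _ = (ν • kap q ν f) * ↑e * (ν⁻¹ • kap q ν f) := by rw [hf2, hfinv]
      _ = (ν * ν⁻¹) • (kap q ν f * ↑e * kap q ν f) := by
          rw [smul_mul_assoc, smul_mul_assoc, mul_smul_comm, smul_smul]
      _ = kap q ν f * ↑e * kap q ν f := by
          rw [mul_inv_cancel₀ hν0, one_smul]
      _ = ν⁻¹ • kap q ν f := hk1
  have inner2 : kap q ν f * ((↑f : A) * ↑e⁻¹ * ↑f⁻¹) * kap q ν f = ν • kap q ν f := by
    calc kap q ν f * ((↑f : A) * ↑e⁻¹ * ↑f⁻¹) * kap q ν f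
        = (kap q ν f * ↑f) * ↑e⁻¹ * ((↑f⁻¹ : A) * kap q ν f) := by
          simp only [mul_assoc]
      _ = (ν • kap q ν f) * ↑e⁻¹ * (ν⁻¹ • kap q ν f) := by rw [hf2, hfinv]
      _ = (ν * ν⁻¹) • (kap q ν f * ↑e⁻¹ * kap q ν f) := by
          rw [smul_mul_assoc, smul_mul_assoc, mul_smul_comm, smul_smul]
      _ = kap q ν f * ↑e⁻¹ * kap q ν f := by
          rw [mul_inv_cancel₀ hν0, one_smul]
      _ = ν • kap q ν f := hk2
  constructor
  · calc kap q ν e * ↑f * kap q ν e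
        = conjA (f * e) (kap q ν f * ((↑f : A) * ↑e * ↑f⁻¹) * kap q ν f) := by
          rw [map_mul, map_mul, hkap_conj, hmid1]
      _ = conjA (f * e) (ν⁻¹ • kap q ν f) := by rw [inner1]
      _ = ν⁻¹ • kap q ν e := by rw [map_smul, hkap_conj]
  · calc kap q ν e * (↑f⁻¹ : A) * kap q ν e
        = conjA (f * e) (kap q ν f * ((↑f : A) * ↑e⁻¹ * ↑f⁻¹) * kap q ν f) := by
          rw [map_mul, map_mul, hkap_conj, hmid2]
      _ = conjA (f * e) (ν • kap q ν f) := by rw [inner2]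
      _ = ν • kap q ν e := by rw [map_smul, hkap_conj]

end

end BMWPaper
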